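/- Let {λₙ} ⊂ 𝔻 be interpolating and {wₙ} ⊂ ℂ∖{0} bounded with limsup_n (1−|λₙ|)·|log|wₙ|| = ∞. Then every φ ∈ N⁺ with φ(λₙ) = wₙ for all n has a nontrivial Blaschke factor. -/

import Mathlib

open MeasureTheory Metric Set Filter Topology

noncomputable def poissonRep (W : ℝ → ℝ) (z : ℂ) : ℂ :=
  (2 * (Real.pi : ℂ))⁻¹ * ∫ t in (-Real.pi)..Real.pi,
    ((Complex.exp ((t : ℂ) * Complex.I) + z) / (Complex.exp ((t : ℂ) * Complex.I) - z)) * (W t : ℂ)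

def IsOuterF (φ : ℂ → ℂ) : Prop :=
  ∃ W : ℝ → ℝ, IntervalIntegrable W volume (-Real.pi) Real.pi ∧
    ∀ z ∈ Metric.ball (0 : ℂ) 1, φ z = Complex.exp (poissonRep W z)

def BoundedAnalytic (f : ℂ → ℂ) : Prop :=
  DifferentiableOn ℂ f (Metric.ball 0 1) ∧
    ∃ C : ℝ, ∀ z ∈ Metric.ball (0 : ℂ) 1, ‖(f z)‖ ≤ C

def MemSmirnov (φ : ℂ → ℂ) : Prop :=
  ∃ f g : ℂ → ℂ, BoundedAnalytic f ∧ BoundedAnalytic g ∧ IsOuterF g ∧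
    ∀ z ∈ Metric.ball (0 : ℂ) 1, φ z = f z / g z

def IsInterpolating (Λ : ℕ → ℂ) : Prop :=
  (∀ n, Λ n ∈ Metric.ball (0 : ℂ) 1) ∧ Function.Injective Λ ∧
  ∃ δ : ℝ, 0 < δ ∧ ∀ n : ℕ, δ ≤
    ∏' k : ℕ, if k = n then (1 : ℝ) else
      ‖((Λ k - Λ n) / (1 - (starRingEnd ℂ) (Λ k) * Λ n))‖

lemma exists_log_on_ball {f : ℂ → ℂ} (hf : DifferentiableOn ℂ f (Metric.ball (0:ℂ) 1))
    (hnz : ∀ z ∈ Metric.ball (0:ℂ) 1, f z ≠ 0) :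
    ∃ h : ℂ → ℂ, DifferentiableOn ℂ h (Metric.ball (0:ℂ) 1) ∧
      ∀ z ∈ Metric.ball (0:ℂ) 1, Complex.exp (h z) = f z := by
  have hball : IsOpen (Metric.ball (0:ℂ) 1) := isOpen_ball
  have han : AnalyticOnNhd ℂ f (Metric.ball (0:ℂ) 1) := hf.analyticOnNhd hball
  set g : ℂ → ℂ := fun z => deriv f z / f z with hg_def
  have hg : DifferentiableOn ℂ g (Metric.ball (0:ℂ) 1) :=
    (han.deriv.differentiableOn).div hf hnz
  have hgan : AnalyticOnNhd ℂ g (Metric.ball (0:ℂ) 1) := hg.analyticOnNhd hball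
  have hg' : DifferentiableOn ℂ (deriv g) (Metric.ball (0:ℂ) 1) :=
    hgan.deriv.differentiableOn
  set h : ℂ → ℂ := fun z => Complex.log (f 0) + ∫ t in (0:ℝ)..1, z * g ((t:ℂ) * z) with hh_def
  -- h has derivative g z at each z in the ball
  have key : ∀ z₀ ∈ Metric.ball (0:ℂ) 1, HasDerivAt h (g z₀) z₀ := by
    intro z₀ hz₀
    rw [mem_ball_zero_iff] at hz₀
    set r : ℝ := (1 + ‖z₀‖) / 2 with hr_def
    have hr1 : r < 1 := by simp only [hr_def]; linarith
    have hrz : ‖z₀‖ < r := by simp only [hr_def]; linarith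
    have hr0 : 0 < r := lt_of_le_of_lt (norm_nonneg z₀) hrz
    set ε : ℝ := (1 - ‖z₀‖) / 2 with hε_def
    have hε : 0 < ε := by simp only [hε_def]; linarith
    -- members of ball z₀ ε have abs < r
    have hmem : ∀ x ∈ Metric.ball z₀ ε, ‖x‖ < r := by
      intro x hx
      rw [mem_ball] at hx
      calc ‖x‖ ≤ ‖x - z₀‖ + ‖z₀‖ := by
            simpa using norm_add_le (x - z₀) z₀
        _ < ε + ‖z₀‖ := by
            rw [dist_eq_norm] at hx; linarith [hx]
        _ = r := by simp only [hε_def, hr_def]; ring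
    have hsub : Metric.closedBall (0:ℂ) r ⊆ Metric.ball (0:ℂ) 1 := by
      intro x hx; rw [mem_closedBall_zero_iff] at hx; rw [mem_ball_zero_iff]
      exact lt_of_le_of_lt hx hr1
    -- bounds for g and deriv g on closed ball r
    have hgc : ContinuousOn g (Metric.closedBall (0:ℂ) r) := (hg.continuousOn).mono hsub
    have hg'c : ContinuousOn (deriv g) (Metric.closedBall (0:ℂ) r) := (hg'.continuousOn).mono hsub
    obtain ⟨C₁, hC₁⟩ := (isCompact_closedBall (0:ℂ) r).exists_bound_of_continuousOn hgc
    obtain ⟨C₂, hC₂⟩ := (isCompact_closedBall (0:ℂ) r).exists_bound_of_continuousOn hg'c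
    have hC₁0 : 0 ≤ C₁ := le_trans (norm_nonneg _) (hC₁ 0 (by simp [hr0.le]))
    have hC₂0 : 0 ≤ C₂ := le_trans (norm_nonneg _) (hC₂ 0 (by simp [hr0.le]))
    -- membership facts
    have htx : ∀ (t : ℝ), t ∈ Set.uIcc (0:ℝ) 1 → ∀ (x : ℂ), ‖x‖ < r →
        (t:ℂ) * x ∈ Metric.closedBall (0:ℂ) r := by
      intro t ht x hx
      rw [Set.uIcc_of_le zero_le_one] at ht
      rw [mem_closedBall_zero_iff, norm_mul]
      calc ‖(t:ℂ)‖ * ‖x‖ ≤ 1 * r := by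
            apply mul_le_mul _ hx.le (norm_nonneg x) zero_le_one
            rw [Complex.norm_real, Real.norm_eq_abs, abs_le]
            constructor <;> [linarith [ht.1]; exact ht.2]
        _ = r := one_mul r
    set F : ℂ → ℝ → ℂ := fun x t => x * g ((t:ℂ) * x) with hF_def
    set F' : ℂ → ℝ → ℂ := fun x t => 1 * g ((t:ℂ) * x) + x * (deriv g ((t:ℂ) * x) * (t:ℂ))
      with hF'_def
    have hIsub : Set.uIoc (0:ℝ) 1 ⊆ Set.uIcc (0:ℝ) 1 := Set.uIoc_subset_uIcc
    have hcont1 : ∀ x : ℂ, ‖x‖ < r → ContinuousOn (fun t : ℝ => g ((t:ℂ) * x)) (Set.uIcc (0:ℝ) 1) := by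
      intro x hx
      apply hgc.comp ((Complex.continuous_ofReal.mul continuous_const).continuousOn)
      intro s hs; exact htx s hs x hx
    have hcont2 : ∀ x : ℂ, ‖x‖ < r →
        ContinuousOn (fun t : ℝ => deriv g ((t:ℂ) * x)) (Set.uIcc (0:ℝ) 1) := by
      intro x hx
      apply hg'c.comp ((Complex.continuous_ofReal.mul continuous_const).continuousOn)
      intro s hs; exact htx s hs x hx
    have hcontF : ∀ x : ℂ, ‖x‖ < r → ContinuousOn (F x) (Set.uIcc (0:ℝ) 1) := fun x hx =>
      continuousOn_const.mul (hcont1 x hx)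
    have hcontF' : ∀ x : ℂ, ‖x‖ < r → ContinuousOn (F' x) (Set.uIcc (0:ℝ) 1) := fun x hx =>
      (continuousOn_const.mul (hcont1 x hx)).add
        (continuousOn_const.mul ((hcont2 x hx).mul (Complex.continuous_ofReal.continuousOn)))
    -- differentiation under the integral
    have main := intervalIntegral.hasDerivAt_integral_of_dominated_loc_of_deriv_le
      (F := F) (F' := F') (x₀ := z₀) (a := 0) (b := 1) (μ := volume)
      (bound := fun _ => C₁ + C₂) (s := Metric.ball z₀ ε) (Metric.ball_mem_nhds z₀ hε)
      ?_ ?_ ?_ ?_ ?_ ?_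
    · obtain ⟨hFint, hderiv⟩ := main
      -- evaluate the integral via FTC
      have hder : ∀ t ∈ Set.uIcc (0:ℝ) 1,
          HasDerivAt (fun t : ℝ => (t:ℂ) * g ((t:ℂ) * z₀)) (F' z₀ t) t := by
        intro t ht
        have hmem' : (t:ℂ) * z₀ ∈ Metric.ball (0:ℂ) 1 := hsub (htx t ht z₀ hrz)
        have hgd : DifferentiableAt ℂ g ((t:ℂ) * z₀) :=
          hg.differentiableAt (hball.mem_nhds hmem')
        have hcomp : HasDerivAt (fun s : ℂ => s * g (s * z₀))
            (1 * g ((t:ℂ) * z₀) + (t:ℂ) * (deriv g ((t:ℂ) * z₀) * z₀)) ((t:ℂ)) := by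
          have h1 : HasDerivAt (fun s : ℂ => s) 1 ((t:ℂ)) := hasDerivAt_id _
          have h2 : HasDerivAt (fun s : ℂ => g (s * z₀)) (deriv g ((t:ℂ) * z₀) * z₀) ((t:ℂ)) := by
            have hinner : HasDerivAt (fun s : ℂ => s * z₀) z₀ ((t:ℂ)) := by
              simpa using (hasDerivAt_id ((t:ℂ))).mul_const z₀
            exact HasDerivAt.comp ((t:ℂ)) hgd.hasDerivAt hinner
          exact h1.mul h2
        have := hcomp.comp_ofReal
        convert this using 1
        simp only [hF'_def]
        ring
      have hFTC := intervalIntegral.integral_eq_sub_of_hasDerivAt hder hFint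
      have hFTC' : (∫ t in (0:ℝ)..1, F' z₀ t) = g z₀ := by
        rw [hFTC]; simp
      rw [hFTC'] at hderiv
      exact hderiv.const_add (Complex.log (f 0))
    -- measurability of F x for x near z₀
    · filter_upwards [Metric.ball_mem_nhds z₀ hε] with x hx
      exact ((hcontF x (hmem x hx)).mono hIsub).aestronglyMeasurable measurableSet_uIoc
    · exact (hcontF z₀ hrz).intervalIntegrable
    · exact ((hcontF' z₀ hrz).mono hIsub).aestronglyMeasurable measurableSet_uIoc
    · -- bound on F'
      filter_upwards with t
      intro ht x hx
      have htIcc : t ∈ Set.uIcc (0:ℝ) 1 := hIsub ht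
      have ht1 : |t| ≤ 1 := by
        rw [Set.uIcc_of_le zero_le_one] at htIcc
        rw [abs_le]; constructor <;> [linarith [htIcc.1]; exact htIcc.2]
      have hmemx := hmem x hx
      have htxm := htx t htIcc x hmemx
      simp only [hF'_def]
      calc ‖1 * g ((t:ℂ) * x) + x * (deriv g ((t:ℂ) * x) * (t:ℂ))‖
          ≤ ‖1 * g ((t:ℂ) * x)‖ + ‖x * (deriv g ((t:ℂ) * x) * (t:ℂ))‖ := norm_add_le _ _
        _ ≤ C₁ + C₂ := by
            apply add_le_add
            · rw [one_mul]; exact hC₁ _ htxm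
            · rw [norm_mul, norm_mul]
              calc ‖x‖ * (‖deriv g ((t:ℂ)*x)‖ * ‖(t:ℂ)‖) ≤ 1 * (C₂ * 1) := by
                    apply mul_le_mul
                    · exact le_of_lt (lt_of_lt_of_le hmemx hr1.le)
                    · apply mul_le_mul (hC₂ _ htxm) _ (norm_nonneg _) hC₂0
                      simpa using ht1
                    · positivity
                    · norm_num
                _ = C₂ := by ring
    · exact intervalIntegrable_const
    · -- differentiability of F in x
      filter_upwards with t
      intro ht x hx
      have htIcc : t ∈ Set.uIcc (0:ℝ) 1 := hIsub ht
      have hmemx := hmem x hx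
      have hmem' : (t:ℂ) * x ∈ Metric.ball (0:ℂ) 1 := hsub (htx t htIcc x hmemx)
      have hgd : DifferentiableAt ℂ g ((t:ℂ) * x) := hg.differentiableAt (hball.mem_nhds hmem')
      have h1 : HasDerivAt (fun y : ℂ => y) 1 x := hasDerivAt_id _
      have h2 : HasDerivAt (fun y : ℂ => g ((t:ℂ) * y)) (deriv g ((t:ℂ) * x) * (t:ℂ)) x := by
        have hinner : HasDerivAt (fun y : ℂ => (t:ℂ) * y) (t:ℂ) x := by
          simpa using (hasDerivAt_id x).const_mul (t:ℂ)
        exact HasDerivAt.comp x hgd.hasDerivAt hinner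
      exact h1.mul h2
  -- now conclude
  have hhdiff : DifferentiableOn ℂ h (Metric.ball (0:ℂ) 1) := fun z hz =>
    ((key z hz).differentiableAt).differentiableWithinAt
  refine ⟨h, hhdiff, ?_⟩
  -- f z * exp (-h z) is constant = 1
  set E : ℂ → ℂ := fun z => f z * Complex.exp (-h z) with hE_def
  have hEd : ∀ z ∈ Metric.ball (0:ℂ) 1, HasDerivAt E 0 z := by
    intro z hz
    have hfd : DifferentiableAt ℂ f z := hf.differentiableAt (hball.mem_nhds hz)
    have h1 : HasDerivAt f (deriv f z) z := hfd.hasDerivAt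
    have h2 : HasDerivAt (fun y => Complex.exp (-h y)) (-(g z) * Complex.exp (-h z)) z := by
      have := ((key z hz).neg).cexp
      simpa [mul_comm] using this
    have := h1.mul h2
    have hd : deriv f z = g z * f z := by
      simp only [hg_def]; rw [div_mul_cancel₀ _ (hnz z hz)]
    refine this.congr_deriv ?_
    rw [hd]
    ring
  have hEconst : ∀ z ∈ Metric.ball (0:ℂ) 1, E z = E 0 := by
    intro z hz
    apply (convex_ball (0:ℂ) 1).is_const_of_fderivWithin_eq_zero
      (𝕜 := ℂ) (fun y hy => ((hEd y hy).differentiableAt).differentiableWithinAt) _ hz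
      (by simp : (0:ℂ) ∈ Metric.ball (0:ℂ) 1)
    intro y hy
    rw [fderivWithin_of_isOpen hball hy]
    have := (hEd y hy).hasFDerivAt.fderiv
    rw [this]
    ext v
    simp
  have hE0 : E 0 = 1 := by
    have h0 : h 0 = Complex.log (f 0) := by
      simp only [hh_def]
      have : (∫ t in (0:ℝ)..1, (0:ℂ) * g ((t:ℂ) * 0)) = 0 := by simp
      rw [this, add_zero]
    simp only [hE_def, h0, ← Complex.exp_neg]
    rw [Complex.exp_neg, Complex.exp_log (hnz 0 (by simp))]
    field_simp [hnz 0 (by simp : (0:ℂ) ∈ Metric.ball (0:ℂ) 1)]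
  intro z hz
  have h1 : f z * Complex.exp (-h z) = 1 := ((hEconst z hz).trans hE0)
  calc Complex.exp (h z) = Complex.exp (h z) * (f z * Complex.exp (-h z)) := by rw [h1]; ring
    _ = f z * (Complex.exp (h z) * Complex.exp (-h z)) := by ring
    _ = f z := by rw [← Complex.exp_add]; simp

lemma harnack_log_bound {f : ℂ → ℂ} (hf : DifferentiableOn ℂ f (Metric.ball (0:ℂ) 1))
    (hnz : ∀ z ∈ Metric.ball (0:ℂ) 1, f z ≠ 0) {C : ℝ}
    (hC : ∀ z ∈ Metric.ball (0:ℂ) 1, ‖(f z)‖ ≤ C) :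
    ∃ K : ℝ, ∀ z ∈ Metric.ball (0:ℂ) 1,
      (1 - ‖z‖) * |Real.log (‖(f z)‖)| ≤ K := by
  obtain ⟨h, hhd, hhf⟩ := exists_log_on_ball hf hnz
  set A : ℝ := Real.log (max C 1) + 1 with hA_def
  have hfpos : ∀ z ∈ Metric.ball (0:ℂ) 1, 0 < ‖(f z)‖ := fun z hz =>
    (norm_pos_iff.mpr (hnz z hz))
  have hre : ∀ z ∈ Metric.ball (0:ℂ) 1, (h z).re = Real.log (‖(f z)‖) := by
    intro z hz
    have : ‖(Complex.exp (h z))‖ = ‖(f z)‖ := by rw [hhf z hz]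
    rw [Complex.norm_exp] at this
    rw [← this, Real.log_exp]
  have hlogle : ∀ z ∈ Metric.ball (0:ℂ) 1, Real.log (‖(f z)‖) ≤ A - 1 := by
    intro z hz
    have h1 : ‖(f z)‖ ≤ max C 1 := le_trans (hC z hz) (le_max_left _ _)
    have := Real.log_le_log (hfpos z hz) h1
    simpa [hA_def] using this
  set u : ℂ → ℂ := fun z => (A : ℂ) - h z with hu_def
  have hure : ∀ z ∈ Metric.ball (0:ℂ) 1, 1 ≤ (u z).re := by
    intro z hz
    simp only [hu_def, Complex.sub_re, Complex.ofReal_re]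
    have := hlogle z hz
    rw [← hre z hz] at this
    linarith
  have h0mem : (0:ℂ) ∈ Metric.ball (0:ℂ) 1 := by simp
  set c : ℂ := u 0 with hc_def
  have hcre : 1 ≤ c.re := hure 0 h0mem
  -- the Cayley-type transform
  set q : ℂ → ℂ := fun z => (u z - c) / (u z + (starRingEnd ℂ) c) with hq_def
  have hdenom_re : ∀ z ∈ Metric.ball (0:ℂ) 1, 2 ≤ (u z + (starRingEnd ℂ) c).re := by
    intro z hz
    simp only [Complex.add_re, Complex.conj_re]
    linarith [hure z hz]
  have hdenom : ∀ z ∈ Metric.ball (0:ℂ) 1, u z + (starRingEnd ℂ) c ≠ 0 := by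
    intro z hz hzero
    have := hdenom_re z hz
    rw [hzero] at this
    simp at this
    linarith
  have hud : DifferentiableOn ℂ u (Metric.ball (0:ℂ) 1) :=
    (differentiableOn_const _).sub hhd
  have hqd : DifferentiableOn ℂ q (Metric.ball (0:ℂ) 1) :=
    (hud.sub (differentiableOn_const _)).div (hud.add (differentiableOn_const _)) hdenom
  -- normSq identity
  have hkey : ∀ w : ℂ, Complex.normSq (w + (starRingEnd ℂ) c) - Complex.normSq (w - c)
      = 4 * w.re * c.re := by
    intro w
    simp [Complex.normSq_apply, Complex.add_re, Complex.add_im, Complex.sub_re, Complex.sub_im,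
      Complex.conj_re, Complex.conj_im]
    ring
  have hmaps : Set.MapsTo q (Metric.ball (0:ℂ) 1) (Metric.ball (0:ℂ) 1) := by
    intro z hz
    rw [mem_ball_zero_iff]
    have h1 : Complex.normSq (u z - c) < Complex.normSq (u z + (starRingEnd ℂ) c) := by
      have := hkey (u z)
      nlinarith [hure z hz, hcre]
    have h2 : ‖(u z - c)‖ < ‖(u z + (starRingEnd ℂ) c)‖ := by
      have := Real.sqrt_lt_sqrt (Complex.normSq_nonneg _) h1
      simpa [Complex.norm_def] using this
    rw [hq_def]
    rw [norm_div]
    rw [div_lt_one (lt_of_le_of_lt (norm_nonneg _) h2)]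
    exact h2
  have hq0 : q 0 = 0 := by simp [hq_def, hc_def]
  -- Schwarz
  have hschwarz : ∀ z ∈ Metric.ball (0:ℂ) 1, ‖(q z)‖ ≤ ‖z‖ := by
    intro z hz
    exact Complex.norm_le_norm_of_mapsTo_ball hqd (hmaps.mono_right ball_subset_closedBall) hq0 (mem_ball_zero_iff.1 hz)
  -- main estimate
  set a : ℝ := c.re with ha_def
  refine ⟨3 * a + |A|, ?_⟩
  intro z hz
  have hz1 : ‖z‖ < 1 := mem_ball_zero_iff.1 hz
  have hz0 : (0:ℝ) ≤ ‖z‖ := norm_nonneg z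
  set rr : ℝ := ‖z‖ with hrr_def
  set w : ℂ := u z with hw_def
  have h2a : c + (starRingEnd ℂ) c = ((2 * a : ℝ) : ℂ) := Complex.add_conj c
  have hsum : w + (starRingEnd ℂ) c = (w - c) + ((2 * a : ℝ) : ℂ) := by
    rw [← h2a]; ring
  have habs2a : ‖(((2*a:ℝ)):ℂ)‖ = 2 * a := by
    rw [Complex.norm_real, Real.norm_eq_abs, _root_.abs_of_nonneg (by linarith : (0:ℝ) ≤ 2*a)]
  have hqabs : ‖(w - c)‖ ≤ rr * ‖(w + (starRingEnd ℂ) c)‖ := by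
    have := hschwarz z hz
    rw [hq_def] at this
    simp only at this
    rw [norm_div, div_le_iff₀ (norm_pos_iff.mpr (hdenom z hz))] at this
    calc ‖(w - c)‖ ≤ ‖z‖ * ‖(w + (starRingEnd ℂ) c)‖ := this
      _ = rr * ‖(w + (starRingEnd ℂ) c)‖ := rfl
  have htri : ‖(w + (starRingEnd ℂ) c)‖ ≤ ‖(w - c)‖ + 2 * a := by
    rw [hsum]
    calc ‖((w - c) + ((2*a:ℝ):ℂ))‖ ≤ ‖(w - c)‖ + ‖((2*a:ℝ):ℂ)‖ :=
          norm_add_le _ _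
      _ = ‖(w - c)‖ + 2 * a := by rw [habs2a]
  have hstep : (1 - rr) * ‖(w - c)‖ ≤ 2 * a := by
    have h1 : ‖(w - c)‖ ≤ rr * (‖(w - c)‖ + 2 * a) :=
      le_trans hqabs (by
        apply mul_le_mul_of_nonneg_left htri hz0)
    nlinarith [norm_nonneg (w - c), hz0, hz1]
  -- (1-r) * Re w ≤ 3a
  have hrew : (1 - rr) * w.re ≤ 3 * a := by
    have h1 : w.re ≤ a + ‖(w - c)‖ := by
      have : (w - c).re ≤ ‖(w - c)‖ := Complex.re_le_norm _
      simp only [Complex.sub_re] at this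
      linarith
    have h2 : (1 - rr) * w.re ≤ (1 - rr) * a + (1 - rr) * ‖(w - c)‖ := by
      nlinarith [hz1]
    have ha1 : 1 ≤ a := hcre
    nlinarith [hz0]
  -- conclude
  have hwre : w.re = A - Real.log (‖(f z)‖) := by
    simp only [hw_def, hu_def, Complex.sub_re, Complex.ofReal_re, hre z hz]
  set L : ℝ := Real.log (‖(f z)‖) with hL_def
  have ha0 : 0 ≤ a := by linarith
  rcases le_or_gt 0 L with hL | hL
  · rw [_root_.abs_of_nonneg hL]
    have : (1 - rr) * L ≤ L := by nlinarith
    have hLA : L ≤ A - 1 := hlogle z hz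
    have : (1 - rr) * L ≤ |A| := le_trans this (le_trans (by linarith) (le_abs_self A))
    linarith
  · rw [_root_.abs_of_neg hL]
    have h1 : (1 - rr) * (A - L) ≤ 3 * a := by rw [← hwre]; exact hrew
    have h2 : -((1 - rr) * A) ≤ |A| := by
      have : (1 - rr) * A ≤ |A| ∧ -( (1-rr) * A) ≤ |A| := by
        constructor <;> nlinarith [le_abs_self A, neg_abs_le A, abs_nonneg A]
      exact this.2
    nlinarith

lemma outer_log_bound {W : ℝ → ℝ} (hW : IntervalIntegrable W volume (-Real.pi) Real.pi) :
    ∃ K : ℝ, ∀ z ∈ Metric.ball (0:ℂ) 1,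
      (1 - ‖z‖) * |Real.log (‖(Complex.exp (poissonRep W z))‖)| ≤ K := by
  set J : ℝ := ∫ t in (-Real.pi)..Real.pi, |W t| with hJ_def
  have hJ0 : 0 ≤ J := by
    apply intervalIntegral.integral_nonneg (by linarith [Real.pi_pos])
    intro t _; exact abs_nonneg _
  refine ⟨Real.pi⁻¹ * J, ?_⟩
  intro z hz
  set r : ℝ := ‖z‖ with hr_def
  have hr1 : r < 1 := mem_ball_zero_iff.1 hz
  have hr0 : 0 ≤ r := norm_nonneg z
  have h1r : 0 < 1 - r := by linarith
  -- pointwise bound on the integrand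
  have hptwise : ∀ t : ℝ,
      ‖((Complex.exp ((t : ℂ) * Complex.I) + z) / (Complex.exp ((t : ℂ) * Complex.I) - z))
        * (W t : ℂ)‖ ≤ (2 / (1 - r)) * |W t| := by
    intro t
    have habs1 : ‖(Complex.exp ((t : ℂ) * Complex.I))‖ = 1 := by
      rw [Complex.norm_exp]
      simp
    have hnum : ‖(Complex.exp ((t : ℂ) * Complex.I) + z)‖ ≤ 2 := by
      calc ‖(Complex.exp ((t : ℂ) * Complex.I) + z)‖
          ≤ ‖(Complex.exp ((t : ℂ) * Complex.I))‖ + ‖z‖ :=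
            norm_add_le _ _
        _ = 1 + r := by rw [habs1]
        _ ≤ 2 := by linarith
    have hden : 1 - r ≤ ‖(Complex.exp ((t : ℂ) * Complex.I) - z)‖ := by
      have : ‖(Complex.exp ((t : ℂ) * Complex.I))‖ ≤
          ‖(Complex.exp ((t : ℂ) * Complex.I) - z)‖ + ‖z‖ := by
        calc ‖(Complex.exp ((t : ℂ) * Complex.I))‖
            = ‖((Complex.exp ((t : ℂ) * Complex.I) - z) + z)‖ := by ring_nf
          _ ≤ _ := norm_add_le _ _
      rw [habs1] at this
      linarith
    rw [norm_mul, norm_div, Complex.norm_real, Real.norm_eq_abs]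
    apply mul_le_mul_of_nonneg_right _ (abs_nonneg _)
    exact div_le_div₀ (by norm_num) hnum h1r hden
  -- bound the integral
  have hbint : IntervalIntegrable (fun t => (2 / (1 - r)) * |W t|) volume (-Real.pi) Real.pi := by
    have := (hW.norm).const_mul (2 / (1 - r))
    simpa [Real.norm_eq_abs] using this
  have hInt : ‖∫ t in (-Real.pi)..Real.pi,
      ((Complex.exp ((t : ℂ) * Complex.I) + z) / (Complex.exp ((t : ℂ) * Complex.I) - z))
        * (W t : ℂ)‖ ≤ (2 / (1 - r)) * J := by
    have h := intervalIntegral.norm_integral_le_of_norm_le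
      (f := fun t => ((Complex.exp ((t : ℂ) * Complex.I) + z) /
        (Complex.exp ((t : ℂ) * Complex.I) - z)) * (W t : ℂ))
      (g := fun t => (2 / (1 - r)) * |W t|) (μ := volume) (a := -Real.pi) (b := Real.pi)
      (by linarith [Real.pi_pos]) (Filter.Eventually.of_forall (fun t _ => hptwise t)) hbint
    have hIg : (∫ t in (-Real.pi)..Real.pi, (2 / (1 - r)) * |W t|) = (2 / (1 - r)) * J :=
      intervalIntegral.integral_const_mul _ _
    rw [hIg] at h
    exact h
  -- bound on the Poisson integral
  have hvabs : ‖(poissonRep W z)‖ ≤ (2 * Real.pi)⁻¹ * ((2 / (1 - r)) * J) := by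
    rw [poissonRep, norm_mul]
    have h2pi : ‖((2 * (Real.pi : ℂ))⁻¹)‖ = (2 * Real.pi)⁻¹ := by
      rw [norm_inv]
      have : (2 * (Real.pi : ℂ)) = ((2 * Real.pi : ℝ) : ℂ) := by push_cast; ring
      rw [this, Complex.norm_real, Real.norm_eq_abs, _root_.abs_of_pos (by positivity)]
    rw [h2pi]
    apply mul_le_mul_of_nonneg_left _ (by positivity)
    exact hInt
  have hlogabs : |Real.log (‖(Complex.exp (poissonRep W z))‖)|
      ≤ ‖(poissonRep W z)‖ := by
    rw [Complex.norm_exp, Real.log_exp]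
    exact Complex.abs_re_le_norm _
  have heq : (1 - r) * ((2 * Real.pi)⁻¹ * ((2 / (1 - r)) * J)) = Real.pi⁻¹ * J := by
    field_simp
  calc (1 - r) * |Real.log (‖(Complex.exp (poissonRep W z))‖)|
      ≤ (1 - r) * ((2 * Real.pi)⁻¹ * ((2 / (1 - r)) * J)) := by
        apply mul_le_mul_of_nonneg_left (le_trans hlogabs hvabs) h1r.le
    _ = Real.pi⁻¹ * J := heq

/-- If `Λ` is interpolating, `{wₙ} ⊂ ℂ∖{0}` is bounded and
`limsup (1-|λₙ|)|log|wₙ|| = ∞`, then any Smirnov function interpolating `{wₙ}`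
must vanish somewhere on `𝔻`, i.e. have a Blaschke factor. -/
theorem interp_needs_blaschke_factor (Λ : ℕ → ℂ) (hΛ : IsInterpolating Λ)
    (w : ℕ → ℂ) (hw0 : ∀ n, w n ≠ 0)
    (hwb : ∃ M : ℝ, ∀ n, ‖(w n)‖ ≤ M)
    (hlim : ∀ c : ℝ, ∃ᶠ n in atTop,
      c < (1 - ‖(Λ n)‖) * |Real.log (‖(w n)‖)|)
    (φ : ℂ → ℂ) (hφ : MemSmirnov φ) (hint : ∀ n, φ (Λ n) = w n) :
    ∃ z ∈ Metric.ball (0 : ℂ) 1, φ z = 0 := by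
  by_contra hcon
  push_neg at hcon
  obtain ⟨f, g, ⟨hfd, Cf, hCf⟩, hgB, ⟨W, hW, hgW⟩, heq⟩ := hφ
  have hgne : ∀ z ∈ Metric.ball (0:ℂ) 1, g z ≠ 0 := fun z hz => by
    rw [hgW z hz]; exact Complex.exp_ne_zero _
  have hfne : ∀ z ∈ Metric.ball (0:ℂ) 1, f z ≠ 0 := by
    intro z hz hf0
    exact hcon z hz (by rw [heq z hz, hf0, zero_div])
  obtain ⟨Kf, hKf⟩ := harnack_log_bound hfd hfne hCf
  obtain ⟨Kg, hKg⟩ := outer_log_bound hW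
  obtain ⟨n, hn⟩ := (hlim (Kf + Kg)).exists
  have hlam : Λ n ∈ Metric.ball (0:ℂ) 1 := hΛ.1 n
  have h1lam : 0 ≤ 1 - ‖(Λ n)‖ := by
    have := mem_ball_zero_iff.1 hlam
    linarith
  have hfpos : 0 < ‖(f (Λ n))‖ := norm_pos_iff.mpr (hfne _ hlam)
  have hgpos : 0 < ‖(g (Λ n))‖ := norm_pos_iff.mpr (hgne _ hlam)
  have hlogw : Real.log (‖(w n)‖) =
      Real.log (‖(f (Λ n))‖) - Real.log (‖(g (Λ n))‖) := by
    rw [← hint n, heq _ hlam, norm_div, Real.log_div hfpos.ne' hgpos.ne']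
  have htri : |Real.log (‖(w n)‖)| ≤
      |Real.log (‖(f (Λ n))‖)| + |Real.log (‖(g (Λ n))‖)| := by
    rw [hlogw]; exact abs_sub _ _
  have hKg' : (1 - ‖(Λ n)‖) * |Real.log (‖(g (Λ n))‖)| ≤ Kg := by
    have := hKg (Λ n) hlam
    rwa [← hgW _ hlam] at this
  have hKf' := hKf (Λ n) hlam
  have : (1 - ‖(Λ n)‖) * |Real.log (‖(w n)‖)| ≤ Kf + Kg := by
    calc (1 - ‖(Λ n)‖) * |Real.log (‖(w n)‖)|
        ≤ (1 - ‖(Λ n)‖) *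
          (|Real.log (‖(f (Λ n))‖)| + |Real.log (‖(g (Λ n))‖)|) :=
          mul_le_mul_of_nonneg_left htri h1lam
      _ = (1 - ‖(Λ n)‖) * |Real.log (‖(f (Λ n))‖)| +
          (1 - ‖(Λ n)‖) * |Real.log (‖(g (Λ n))‖)| := by ring
      _ ≤ Kf + Kg := add_le_add hKf' hKg'
  linarith
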